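/- Let 1 → N → G → S → 1 be a short exact sequence of groups with S finite. If N satisfies ωACC, then G satisfies ωACC. -/

import Mathlib

/-- `RankLE H r`: the subgroup `H` is generated by at most `r` elements. -/
def RankLE {G : Type*} [Group G] (H : Subgroup G) (r : ℕ) : Prop :=
  ∃ S : Finset G, (S : Set G) ⊆ (H : Set G) ∧ Subgroup.closure (S : Set G) = H ∧ S.card ≤ r

/-- A group satisfies ωACC if every ascending chain of subgroups of uniformly
bounded rank is eventually constant. -/
def OmegaACC (G : Type*) [Group G] : Prop :=
  ∀ r : ℕ, ∀ H : ℕ → Subgroup G, Monotone H → (∀ n, RankLE (H n) r) →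
    ∃ N, ∀ n, N ≤ n → H n = H N

/-- A monotone sequence in a finite partial order stabilizes. -/
lemma stab_of_finite {α : Type*} [PartialOrder α] [Finite α] (f : ℕ → α) (hf : Monotone f) :
    ∃ N, ∀ n, N ≤ n → f n = f N := by
  obtain ⟨a, ha, hmax⟩ := Set.Finite.exists_maximalFor id (Set.range f)
    (Set.toFinite _) (Set.range_nonempty f)
  obtain ⟨M, rfl⟩ := ha
  exact ⟨M, fun n hn => le_antisymm (hmax ⟨n, rfl⟩ (hf hn)) (hf hn)⟩

/-- Schreier index bound: the intersection with the kernel of a map to a finite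
group has rank at most `Nat.card S * r`. -/
lemma rankLE_inf_ker {G S : Type*} [Group G] [Group S] [Finite S] (p : G →* S)
    {H : Subgroup G} {r : ℕ} (h : RankLE H r) : RankLE (H ⊓ p.ker) (Nat.card S * r) := by
  classical
  obtain ⟨s, hsub, hcl, hcard⟩ := h
  subst hcl
  set K : Subgroup G := Subgroup.closure (s : Set G) with hK
  set f : K →* S := p.comp K.subtype with hf
  have hker : f.ker = p.ker.subgroupOf K := (MonoidHom.comap_ker p K.subtype).symm
  haveI : f.ker.FiniteIndex := by
    constructor
    rw [Subgroup.index_ker]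
    exact Nat.card_pos.ne'
  -- generators of ⊤ in K
  have hs' : Subgroup.closure ((s.preimage Subtype.val Subtype.coe_injective.injOn :
      Finset K) : Set K) = ⊤ := by
    rw [Finset.coe_preimage, ← Subgroup.coe_subtype, Subgroup.closure_preimage_eq_top]
  obtain ⟨T, hTcard, hTtop⟩ := Subgroup.exists_finset_card_le_mul f.ker hs'
  have hcl' : Subgroup.closure ((T.image (fun t : f.ker => ((t : K) : G)) : Finset G) : Set G)
      = K ⊓ p.ker := by
    rw [Finset.coe_image]
    have himg : (fun t : f.ker => ((t : K) : G)) '' (T : Set f.ker)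
        = K.subtype '' (f.ker.subtype '' (T : Set f.ker)) := by
      rw [Set.image_image]; rfl
    rw [himg, ← MonoidHom.map_closure, ← MonoidHom.map_closure, hTtop]
    have htop : (⊤ : Subgroup f.ker).map f.ker.subtype = f.ker := by
      rw [← MonoidHom.range_eq_map, Subgroup.range_subtype]
    rw [htop, hker, Subgroup.subgroupOf_map_subtype, inf_comm]
  refine ⟨T.image (fun t : f.ker => ((t : K) : G)), ?_, hcl', ?_⟩
  · intro x hx
    have := Subgroup.subset_closure hx
    rw [hcl'] at this
    exact this
  · calc (T.image (fun t : f.ker => ((t : K) : G))).card ≤ T.card := Finset.card_image_le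
      _ ≤ f.ker.index * (s.preimage Subtype.val Subtype.coe_injective.injOn).card := hTcard
      _ ≤ Nat.card S * r := by
          apply Nat.mul_le_mul
          · rw [Subgroup.index_ker]
            exact Nat.card_le_card_of_injective f.range.subtype f.range.subtype_injective
          · exact le_trans (Finset.card_le_card_of_injOn Subtype.val
              (fun a ha => Finset.mem_preimage.mp ha) Subtype.coe_injective.injOn) hcard

/-- Pulling back a subgroup contained in the range of an injective map preserves rank bounds. -/
lemma rankLE_comap_of_injective {N G : Type*} [Group N] [Group G] (i : N →* G)
    (hi : Function.Injective i) {K : Subgroup G} (hK : K ≤ i.range) {r : ℕ}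
    (h : RankLE K r) : RankLE (K.comap i) r := by
  obtain ⟨s, hsub, hcl, hcard⟩ := h
  refine ⟨s.preimage i hi.injOn, ?_, ?_, ?_⟩
  · intro a ha
    have : i a ∈ s := Finset.mem_preimage.mp (by exact_mod_cast ha)
    exact hsub this
  · apply Subgroup.map_injective hi
    rw [Subgroup.map_comap_eq_self hK, MonoidHom.map_closure, Finset.coe_preimage]
    have : i '' (i ⁻¹' (s : Set G)) = (s : Set G) := by
      rw [Set.image_preimage_eq_inter_range]
      exact Set.inter_eq_self_of_subset_left (fun x hx => hK (hsub hx))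
    rw [this, hcl]
  · exact le_trans (Finset.card_le_card_of_injOn i
      (fun a ha => Finset.mem_preimage.mp ha) hi.injOn) hcard

/-- Let `1 → N → G → S → 1` be a short exact sequence of groups with `S` finite.
If `N` satisfies ωACC, then `G` satisfies ωACC. -/
theorem omegaACC_of_finite_quotient {N G S : Type*} [Group N] [Group G] [Group S]
    [Finite S] (i : N →* G) (p : G →* S) (hi : Function.Injective i)
    (hp : Function.Surjective p) (hex : i.range = p.ker) (hN : OmegaACC N) :
    OmegaACC G := by
  intro r H hmono hrank
  set c : ℕ := Nat.card S * r with hc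
  set L : ℕ → Subgroup N := fun n => (H n ⊓ p.ker).comap i with hL
  have hle : ∀ n, H n ⊓ p.ker ≤ i.range := fun n => le_trans inf_le_right hex.ge
  have hLmono : Monotone L := fun a b hab =>
    Subgroup.comap_mono (inf_le_inf_right _ (hmono hab))
  have hLrank : ∀ n, RankLE (L n) c := fun n =>
    rankLE_comap_of_injective i hi (hle n) (rankLE_inf_ker p (hrank n))
  obtain ⟨N1, hN1⟩ := hN c L hLmono hLrank
  haveI : Finite (Subgroup S) :=
    Finite.of_injective (fun K : Subgroup S => (K : Set S)) SetLike.coe_injective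
  set P : ℕ → Subgroup S := fun n => (H n).map p with hP
  have hPmono : Monotone P := fun a b hab => Subgroup.map_mono (hmono hab)
  obtain ⟨N2, hN2⟩ := stab_of_finite P hPmono
  refine ⟨max N1 N2, fun n hn => ?_⟩
  apply le_antisymm _ (hmono hn)
  have hLeq : L n = L (max N1 N2) :=
    (hN1 n (le_trans (le_max_left _ _) hn)).trans (hN1 _ (le_max_left _ _)).symm
  have hKeq : H n ⊓ p.ker = H (max N1 N2) ⊓ p.ker := by
    rw [← Subgroup.map_comap_eq_self (hle n),
        ← Subgroup.map_comap_eq_self (hle (max N1 N2))]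
    exact congrArg (Subgroup.map i) hLeq
  have hPeq : P n = P (max N1 N2) :=
    (hN2 n (le_trans (le_max_right _ _) hn)).trans (hN2 _ (le_max_right _ _)).symm
  intro x hx
  have hpx : p x ∈ P (max N1 N2) := hPeq ▸ Subgroup.mem_map.mpr ⟨x, hx, rfl⟩
  obtain ⟨y, hy, hpy⟩ := Subgroup.mem_map.mp hpx
  have hxy : x * y⁻¹ ∈ H n ⊓ p.ker := by
    refine Subgroup.mem_inf.mpr ⟨mul_mem hx (inv_mem (hmono hn hy)), ?_⟩
    rw [MonoidHom.mem_ker, map_mul, map_inv, hpy, mul_inv_cancel]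
  rw [hKeq] at hxy
  have hfin : (x * y⁻¹) * y ∈ H (max N1 N2) := mul_mem (Subgroup.mem_inf.mp hxy).1 hy
  simpa using hfin
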